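/- Let S be a subset of {1,...,n}. Then there exists an integer m with |S| ≤ m ≤ O(|S|² log n) such that for all distinct i, j ∈ S, i ≢ j (mod m). More precisely, there exists a constant C such that for all n ≥ 2 and all S ⊆ {1,...,n}, some m with |S| ≤ m ≤ C·|S|²·log n satisfies: i mod m ≠ j mod m for all distinct i, j ∈ S. -/

import Mathlib

open Finset

lemma choose_dvd_lcm_Icc (n k : ℕ) (hn : 0 < n) (hk : k ≤ n) :
    Nat.choose n k ∣ (Finset.Icc 1 n).lcm id := by
  have hL : (Finset.Icc 1 n).lcm id ≠ 0 := by
    intro h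
    rw [Finset.lcm_eq_zero_iff] at h
    simp only [Set.mem_image, id] at h
    obtain ⟨x, hx, hx0⟩ := h
    rw [Finset.mem_Icc] at hx
    omega
  have hc : Nat.choose n k ≠ 0 := (Nat.choose_pos hk).ne'
  rw [← Nat.factorization_le_iff_dvd hc hL]
  intro p
  by_cases hp : p.Prime
  · rw [← Nat.Prime.pow_dvd_iff_le_factorization hp hL]
    rcases Nat.eq_zero_or_pos ((Nat.choose n k).factorization p) with h0 | hpos
    · simp [h0]
    · have hle : p ^ (Nat.choose n k).factorization p ≤ n :=
        Nat.pow_factorization_choose_le hn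
      have hmem : p ^ (Nat.choose n k).factorization p ∈ Finset.Icc 1 n := by
        rw [Finset.mem_Icc]
        exact ⟨Nat.one_le_iff_ne_zero.2 (pow_ne_zero _ hp.ne_zero), hle⟩
      exact Finset.dvd_lcm hmem
  · simp [Nat.factorization_eq_zero_of_not_prime _ hp]

lemma two_mul_le_two_pow (t : ℕ) (ht : 0 < t) : 2 * t ≤ 2 ^ t := by
  induction t with
  | zero => omega
  | succ s ih =>
    rcases Nat.eq_zero_or_pos s with rfl | hs
    · norm_num
    · have := ih hs
      have h2s : 2 ≤ 2 ^ s := Nat.one_lt_two_pow_iff.mpr hs.ne'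
      calc 2 * (s + 1) = 2 * s + 2 := by ring
        _ ≤ 2 ^ s + 2 ^ s := by omega
        _ = 2 ^ (s + 1) := by ring

lemma two_pow_le_lcm_Icc (t : ℕ) (ht : 0 < t) :
    2 ^ t ≤ (Finset.Icc 1 (2 * t)).lcm id := by
  have h1 : Nat.centralBinom t ∣ (Finset.Icc 1 (2 * t)).lcm id :=
    choose_dvd_lcm_Icc (2 * t) t (by omega) (by omega)
  have hL : (Finset.Icc 1 (2 * t)).lcm id ≠ 0 := by
    intro h
    rw [Finset.lcm_eq_zero_iff] at h
    simp only [Set.mem_image, id] at h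
    obtain ⟨x, hx, hx0⟩ := h
    rw [Finset.mem_Icc] at hx
    omega
  have h2 : Nat.centralBinom t ≤ (Finset.Icc 1 (2 * t)).lcm id :=
    Nat.le_of_dvd (Nat.pos_of_ne_zero hL) h1
  have h3 : 4 ^ t ≤ 2 * t * Nat.centralBinom t :=
    Nat.four_pow_le_two_mul_self_mul_centralBinom t ht
  have h4 : 2 ^ t * (2 * t) ≤ 4 ^ t := by
    have : (4 : ℕ) ^ t = 2 ^ t * 2 ^ t := by
      rw [← pow_add, ← two_mul]
      norm_num [pow_mul]
    rw [this]
    exact Nat.mul_le_mul_left _ (two_mul_le_two_pow t ht)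
  have h5 : 2 ^ t * (2 * t) ≤ 2 * t * (Finset.Icc 1 (2*t)).lcm id := by
    calc 2 ^ t * (2 * t) ≤ 4 ^ t := h4
      _ ≤ 2 * t * Nat.centralBinom t := h3
      _ ≤ 2 * t * (Finset.Icc 1 (2*t)).lcm id := Nat.mul_le_mul_left _ h2
  exact Nat.le_of_mul_le_mul_left (by rw [mul_comm (2^t)] at h5; exact h5) (by omega : 0 < 2 * t)


/-- There is a constant `C > 0` such that for all `n ≥ 2` and every subset `S` of
`{1, ..., n}`, there is an integer `m` with `|S| ≤ m ≤ C·|S|²·log n` such that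
the elements of `S` are pairwise incongruent modulo `m`. -/
theorem stmt_0 :
    ∃ C : ℝ, 0 < C ∧ ∀ n : ℕ, 2 ≤ n → ∀ S : Finset ℕ, S ⊆ Finset.Icc 1 n →
      ∃ m : ℕ, S.card ≤ m ∧ (m : ℝ) ≤ C * (S.card : ℝ)^2 * Real.log n ∧
        ∀ i ∈ S, ∀ j ∈ S, i ≠ j → i % m ≠ j % m := by
  classical
  refine ⟨20, by norm_num, fun n hn S hS => ?_⟩
  set k := S.card with hk
  have hlogn : Real.log 2 ≤ Real.log n := by
    apply Real.log_le_log (by norm_num)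
    exact_mod_cast hn
  have hlog2 : (0.6931471803 : ℝ) < Real.log 2 := Real.log_two_gt_d9
  -- trivial small cases
  rcases le_or_gt k 1 with hk1 | hk2
  · refine ⟨k, le_refl _, ?_, ?_⟩
    · rcases Nat.le_one_iff_eq_zero_or_eq_one.mp hk1 with h | h <;> rw [h]
      · simp
      · push_cast
        nlinarith
    · intro i hi j hj hij
      exact absurd (Finset.card_le_one.mp hk1 i hi j hj) hij
  -- main case : k ≥ 2
  have hkn : k ≤ n := by
    have := Finset.card_le_card hS
    rwa [Nat.card_Icc, Nat.add_sub_cancel] at this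
  set P : ℕ → Prop := fun m => k ≤ m ∧ ∀ i ∈ S, ∀ j ∈ S, i ≠ j → i % m ≠ j % m with hP
  have hPn : P n := by
    constructor
    · exact hkn
    · intro i hi j hj hij hmod
      have hi' := Finset.mem_Icc.mp (hS hi)
      have hj' := Finset.mem_Icc.mp (hS hj)
      have hd : (n : ℤ) ∣ (j : ℤ) - i := (Nat.modEq_iff_dvd).mp hmod
      have : ((j : ℤ) - i) = 0 := by
        apply Int.eq_zero_of_abs_lt_dvd hd
        rw [abs_lt]
        constructor <;> push_cast <;> omega
      omega
  have hex : ∃ m, P m := ⟨n, hPn⟩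
  set m := Nat.find hex with hm
  have hPm : P m := Nat.find_spec hex
  refine ⟨m, hPm.1, ?_, hPm.2⟩
  -- every m' with 1 ≤ m' < m has a congruent pair
  have hbad : ∀ m', 1 ≤ m' → m' < m → ∃ i ∈ S, ∃ j ∈ S, i ≠ j ∧ i % m' = j % m' := by
    intro m' h1 h2
    have hnP : ¬ (k ≤ m' ∧ ∀ i ∈ S, ∀ j ∈ S, i ≠ j → i % m' ≠ j % m') :=
      Nat.find_min hex h2
    push_neg at hnP
    rcases lt_or_ge m' k with hlt | hge
    · -- pigeonhole
      have hmaps : ∀ a ∈ S, a % m' ∈ Finset.range m' := by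
        intro a _
        exact Finset.mem_range.mpr (Nat.mod_lt _ h1)
      have hcard : (Finset.range m').card < S.card := by
        rwa [Finset.card_range]
      obtain ⟨x, hx, y, hy, hxy, hfeq⟩ :=
        Finset.exists_ne_map_eq_of_card_lt_of_maps_to hcard hmaps
      exact ⟨x, hx, y, hy, hxy, hfeq⟩
    · obtain ⟨i, hi, j, hj, hij, hmod⟩ := hnP hge
      exact ⟨i, hi, j, hj, hij, by tauto⟩
  -- the product of differences
  set D : ℕ := ∏ p ∈ S.offDiag, ((p.1 : ℤ) - p.2).natAbs with hD
  have hDpos : 0 < D := by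
    apply Finset.prod_pos
    intro p hp
    have := Finset.mem_offDiag.mp hp
    have h12 : p.1 ≠ p.2 := this.2.2
    rcases p with ⟨a, b⟩
    simp only at h12 ⊢
    omega
  have hdvdD : ∀ m', 1 ≤ m' → m' < m → m' ∣ D := by
    intro m' h1 h2
    obtain ⟨i, hi, j, hj, hij, hmod⟩ := hbad m' h1 h2
    have hd : (m' : ℤ) ∣ (j : ℤ) - i := (Nat.modEq_iff_dvd).mp hmod
    have hd' : m' ∣ ((j : ℤ) - i).natAbs := by
      have := Int.natAbs_dvd_natAbs.mpr hd
      simpa using this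
    have hmem : ((j, i) : ℕ × ℕ) ∈ S.offDiag :=
      Finset.mem_offDiag.mpr ⟨hj, hi, fun h => hij h.symm⟩
    exact hd'.trans (Finset.dvd_prod_of_mem (fun p => ((p.1 : ℤ) - p.2).natAbs) hmem)
  have hlcm : (Finset.Icc 1 (m - 1)).lcm id ∣ D := by
    apply Finset.lcm_dvd
    intro b hb
    have := Finset.mem_Icc.mp hb
    have hbm : b < m := by omega
    exact hdvdD b this.1 hbm
  have hDle : D ≤ n ^ (k * k) := by
    have h1 : D ≤ n ^ S.offDiag.card := by
      apply Finset.prod_le_pow_card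
      intro p hp
      have hmem := Finset.mem_offDiag.mp hp
      have h1' := Finset.mem_Icc.mp (hS hmem.1)
      have h2' := Finset.mem_Icc.mp (hS hmem.2.1)
      rcases p with ⟨a, b⟩
      simp only at h1' h2' ⊢
      omega
    refine h1.trans (Nat.pow_le_pow_right (by omega) ?_)
    rw [Finset.offDiag_card, ← hk]
    exact Nat.sub_le _ _
  -- dividing into cases on size of m
  set t := (m - 1) / 2 with ht
  rcases Nat.eq_zero_or_pos t with ht0 | htpos
  · -- m ≤ 2
    have hm2 : m ≤ 2 := by omega
    have : (m : ℝ) ≤ 2 := by exact_mod_cast hm2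
    have hkR : (2 : ℝ) ≤ (k : ℝ) := by exact_mod_cast hk2
    nlinarith [Real.log_nonneg (by norm_num : (1:ℝ) ≤ 2)]
  · have h2t : 2 * t ≤ m - 1 := by omega
    have hsub : Finset.Icc 1 (2 * t) ⊆ Finset.Icc 1 (m - 1) :=
      Finset.Icc_subset_Icc_right h2t
    have hdvd2 : (Finset.Icc 1 (2 * t)).lcm id ∣ (Finset.Icc 1 (m - 1)).lcm id :=
      Finset.lcm_dvd fun b hb => Finset.dvd_lcm (hsub hb)
    have hchain : 2 ^ t ≤ n ^ (k * k) :=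
      ((two_pow_le_lcm_Icc t htpos).trans
        (Nat.le_of_dvd hDpos (hdvd2.trans hlcm))).trans hDle
    have hchainR : (2 : ℝ) ^ t ≤ (n : ℝ) ^ (k * k) := by exact_mod_cast hchain
    have hlogle : (t : ℝ) * Real.log 2 ≤ (k * k : ℕ) * Real.log n := by
      rw [← Real.log_pow, ← Real.log_pow]
      apply Real.log_le_log (by positivity) hchainR
    have hmt : (m : ℝ) ≤ 4 * t := by
      have : m ≤ 4 * t := by omega
      exact_mod_cast this
    have htR : (1 : ℝ) ≤ (t : ℝ) := by exact_mod_cast htpos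
    have hkkR : ((k * k : ℕ) : ℝ) = (k : ℝ) ^ 2 := by push_cast; ring
    rw [hkkR] at hlogle
    have hlognpos : 0 < Real.log n := by linarith
    have hkR : (2 : ℝ) ≤ (k : ℝ) := by exact_mod_cast hk2
    nlinarith
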